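/- For a positive integer N, the congruence subgroup Γ₀(N) contains an element of order 4 if and only if the congruence a² ≡ −1 (mod N) has a solution; that is, there exists A ∈ Γ₀(N) with orderOf A = 4 if and only if there exists a ∈ ℤ/N with a² = −1. -/

import Mathlib

open Matrix MatrixGroups

lemma sl2_sq (B : SL(2,ℤ)) (h2 : B ^ 2 = 1) (h1 : B ≠ 1) : B = -1 := by
  have hM : (B : Matrix (Fin 2) (Fin 2) ℤ) * B = 1 := by
    have := congrArg (fun x : SL(2,ℤ) => (x : Matrix (Fin 2) (Fin 2) ℤ)) h2
    simpa [pow_two] using this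
  have hdet : B.1 0 0 * B.1 1 1 - B.1 0 1 * B.1 1 0 = 1 := by
    have := B.2
    rw [Matrix.det_fin_two] at this
    linarith [this]
  have e00 := congrFun (congrFun hM 0) 0
  have e01 := congrFun (congrFun hM 0) 1
  have e10 := congrFun (congrFun hM 1) 0
  have e11 := congrFun (congrFun hM 1) 1
  simp [Matrix.mul_apply, Fin.sum_univ_two, Matrix.one_apply] at e00 e01 e10 e11
  set a := B.1 0 0 with h_a; set b := B.1 0 1 with h_b
  set c := B.1 1 0 with h_c; set d := B.1 1 1 with h_d
  have hb0 : b * (a + d) = 0 := by nlinarith [e01]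
  have hc0 : c * (a + d) = 0 := by nlinarith [e10]
  have had : a + d ≠ 0 := by
    intro h
    nlinarith [e00, hdet]
  have hb : b = 0 := by rcases mul_eq_zero.mp hb0 with h | h; exact h; exact absurd h had
  have hc : c = 0 := by rcases mul_eq_zero.mp hc0 with h | h; exact h; exact absurd h had
  have hda : d = a := by nlinarith [e00, hdet]
  have ha2 : a * a = 1 := by nlinarith [e00]
  rcases Int.eq_one_or_neg_one_of_mul_eq_one ha2 with h | h
  · exfalso
    apply h1
    have hdd : d = 1 := by rw [hda, h]
    ext i j
    fin_cases i <;> fin_cases j <;> simp [← h_a, ← h_b, ← h_c, ← h_d, h, hb, hc, hdd]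
  · have hdd : d = -1 := by rw [hda, h]
    ext i j
    fin_cases i <;> fin_cases j <;> simp [← h_a, ← h_b, ← h_c, ← h_d, h, hb, hc, hdd]

/-- Γ₀(N) contains an element of order 4 iff a² ≡ −1 (mod N) is solvable. -/
theorem gamma0_order_four_iff (N : ℕ) (hN : 0 < N) :
    (∃ A ∈ CongruenceSubgroup.Gamma0 N, orderOf A = 4) ↔
      ∃ a : ZMod N, a ^ 2 = -1 := by
  constructor
  · rintro ⟨A, hA, hord⟩
    have h4 : A ^ 4 = 1 := by rw [← hord]; exact pow_orderOf_eq_one A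
    have h2 : A ^ 2 ≠ 1 := by
      intro h
      have := orderOf_dvd_of_pow_eq_one h
      rw [hord] at this
      omega
    have hsq : A ^ 2 = -1 := by
      apply sl2_sq (A ^ 2) _ h2
      rw [← pow_mul]; exact h4
    have hent : A.1 0 0 * A.1 0 0 + A.1 0 1 * A.1 1 0 = -1 := by
      have := congrArg (fun x : SL(2,ℤ) => (x : Matrix (Fin 2) (Fin 2) ℤ) 0 0) hsq
      simpa [pow_two, Matrix.mul_apply, Fin.sum_univ_two] using this
    refine ⟨((A.1 0 0 : ℤ) : ZMod N), ?_⟩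
    have hc : ((A.1 1 0 : ℤ) : ZMod N) = 0 := CongruenceSubgroup.Gamma0_mem.mp hA
    have := congrArg (fun z : ℤ => (z : ZMod N)) hent
    push_cast at this
    rw [hc] at this
    push_cast
    rw [pow_two]
    linear_combination this
  · rintro ⟨a, ha⟩
    obtain ⟨α, hα⟩ := ZMod.intCast_surjective (n := N) a
    have hdvd : ((α ^ 2 + 1 : ℤ) : ZMod N) = 0 := by
      push_cast [hα, ha]; ring
    refine ⟨⟨!![α, -1; α^2+1, -α], by simp [Matrix.det_fin_two]; ring⟩, ?_, ?_⟩
    · refine CongruenceSubgroup.Gamma0_mem.mpr ?_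
      simpa using hdvd
    · set A : SL(2,ℤ) := ⟨!![α, -1; α^2+1, -α], by simp [Matrix.det_fin_two]; ring⟩ with hAdef
      have hsq : A ^ 2 = -1 := by
        ext i j
        rw [pow_two, Matrix.SpecialLinearGroup.coe_mul, hAdef]
        fin_cases i <;> fin_cases j <;>
          simp [hAdef, pow_two, Matrix.mul_apply, Fin.sum_univ_two] <;> ring
      have h4 : A ^ (2 ^ (1 + 1)) = 1 := by
        norm_num
        rw [show (4:ℕ) = 2*2 from rfl, pow_mul, hsq]
        simp
      have h2 : ¬ A ^ 2 ^ 1 = 1 := by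
        rw [pow_one, hsq]
        intro h
        have := congrArg (fun x : SL(2,ℤ) => (x : Matrix (Fin 2) (Fin 2) ℤ) 0 0) h
        simp at this
      have := orderOf_eq_prime_pow h2 h4
      simpa using this
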